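/- Let a < b be real numbers and X, H, u, v : ℝ → ℝ satisfying: u is twice differentiable at every point of (-∞, b] with continuous u', u''; on (-∞, a) ∪ (a, b), H·v is differentiable with derivative (Hv)' and I := v·X − (Hv)' is differentiable with derivative I'; v·H and I have finite one-sided limits at a and values at b equal to their left limits at b; (vH·u')(x) → 0 and (I·u)(x) → 0 as x → −∞; v·(X u' + H u''), I·u', and I'·u are Lebesgue integrable on (-∞, b]. If moreover u(a) = u(b), (vH)(a⁺) = (vH)(a⁻), (vH)(b) = 0, and I(b) = I(a⁺) − I(a⁻), then ∫_{(-∞,b]} v(x)(X(x)u'(x) + H(x)u''(x)) dx = ∫_{(-∞,b]} (−I'(x)) u(x) dx. -/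

import Mathlib

open MeasureTheory Filter Topology Set

/-- Theorem 4 of the paper: with the boundary conditions `u(a) = u(b)`,
`(vH)(a⁺) = (vH)(a⁻)`, `(vH)(b) = 0`, and `I(b) = I(a⁺) − I(a⁻)`, the stochastic
Koopman generator `A u = X u' + H u''` satisfies `⟨v, A u⟩ = ⟨−I', u⟩` on `(-∞, b]`. -/
theorem hybrid_FP_adjoint_stochastic
    (a b : ℝ) (hab : a < b) (X H u v u' u'' Hv' I I' : ℝ → ℝ)
    (vHam vHap Iam Iap : ℝ)
    (hu1 : ∀ x ∈ Set.Iic b, HasDerivAt u (u' x) x)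
    (hu2 : ∀ x ∈ Set.Iic b, HasDerivAt u' (u'' x) x)
    (hu'c : ContinuousOn u' (Set.Iic b))
    (hu''c : ContinuousOn u'' (Set.Iic b))
    (hHv : ∀ x ∈ Set.Iio a ∪ Set.Ioo a b, HasDerivAt (fun y => H y * v y) (Hv' x) x)
    (hIdef : ∀ x, I x = v x * X x - Hv' x)
    (hIdiff : ∀ x ∈ Set.Iio a ∪ Set.Ioo a b, HasDerivAt I (I' x) x)
    (hvH_am : Tendsto (fun x => v x * H x) (nhdsWithin a (Set.Iio a)) (nhds vHam))
    (hvH_ap : Tendsto (fun x => v x * H x) (nhdsWithin a (Set.Ioi a)) (nhds vHap))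
    (hvH_b : Tendsto (fun x => v x * H x) (nhdsWithin b (Set.Iio b)) (nhds (v b * H b)))
    (hI_am : Tendsto I (nhdsWithin a (Set.Iio a)) (nhds Iam))
    (hI_ap : Tendsto I (nhdsWithin a (Set.Ioi a)) (nhds Iap))
    (hI_b : Tendsto I (nhdsWithin b (Set.Iio b)) (nhds (I b)))
    (hbot1 : Tendsto (fun x => v x * H x * u' x) atBot (nhds 0))
    (hbot2 : Tendsto (fun x => I x * u x) atBot (nhds 0))
    (hint1 : IntegrableOn (fun x => v x * (X x * u' x + H x * u'' x)) (Set.Iic b))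
    (hint2 : IntegrableOn (fun x => I x * u' x) (Set.Iic b))
    (hint3 : IntegrableOn (fun x => I' x * u x) (Set.Iic b))
    (hub : u a = u b)
    (hbc1 : vHap = vHam)
    (hbc2 : v b * H b = 0)
    (hbc3 : I b = Iap - Iam) :
    ∫ x in Set.Iic b, v x * (X x * u' x + H x * u'' x)
      = ∫ x in Set.Iic b, (-I' x) * u x := by
  -- F is the "flux + boundary" function, G its derivative on the smooth pieces
  set F : ℝ → ℝ := fun x => v x * H x * u' x + I x * u x with hF
  set G : ℝ → ℝ := fun x => v x * (X x * u' x + H x * u'' x) + I' x * u x with hG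
  have hsub : Set.Iio a ∪ Set.Ioo a b ⊆ Set.Iic b := by
    rintro x (hx | hx)
    · exact le_of_lt (lt_trans hx hab)
    · exact le_of_lt hx.2
  -- derivative of F on the smooth pieces
  have hFderiv : ∀ x ∈ Set.Iio a ∪ Set.Ioo a b, HasDerivAt F (G x) x := by
    intro x hx
    have hvHx : HasDerivAt (fun y => v y * H y) (Hv' x) x :=
      (hHv x hx).congr_of_eventuallyEq (Filter.Eventually.of_forall fun y => mul_comm (v y) (H y))
    have h1 : HasDerivAt (fun y => v y * H y * u' y)
        (Hv' x * u' x + v x * H x * u'' x) x := hvHx.mul (hu2 x (hsub hx))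
    have h2 : HasDerivAt (fun y => I y * u y) (I' x * u x + I x * u' x) x :=
      (hIdiff x hx).mul (hu1 x (hsub hx))
    have h3 : HasDerivAt (fun y => v y * H y * u' y + I y * u y) _ x := h1.add h2
    rw [hF, hG]
    convert h3 using 1
    rw [hIdef]; ring
  -- continuity of u, u' at points of Iic b
  have hua : ContinuousAt u a := (hu1 a (le_of_lt hab)).continuousAt
  have hu'a : ContinuousAt u' a := (hu2 a (le_of_lt hab)).continuousAt
  have hubc : ContinuousAt u b := (hu1 b Set.self_mem_Iic).continuousAt
  have hu'b : ContinuousAt u' b := (hu2 b Set.self_mem_Iic).continuousAt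
  -- one-sided limits of F
  set La : ℝ := vHam * u' a + Iam * u a with hLa
  set Lap : ℝ := vHap * u' a + Iap * u a with hLap
  have hF_am : Tendsto F (nhdsWithin a (Set.Iio a)) (nhds La) :=
    (hvH_am.mul (hu'a.tendsto.mono_left nhdsWithin_le_nhds)).add
      (hI_am.mul (hua.tendsto.mono_left nhdsWithin_le_nhds))
  have hF_ap : Tendsto F (nhdsWithin a (Set.Ioi a)) (nhds Lap) :=
    (hvH_ap.mul (hu'a.tendsto.mono_left nhdsWithin_le_nhds)).add
      (hI_ap.mul (hua.tendsto.mono_left nhdsWithin_le_nhds))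
  have hF_b : Tendsto F (nhdsWithin b (Set.Iio b)) (nhds (F b)) :=
    (hvH_b.mul (hu'b.tendsto.mono_left nhdsWithin_le_nhds)).add
      (hI_b.mul (hubc.tendsto.mono_left nhdsWithin_le_nhds))
  -- integrability of G
  have hGint : IntegrableOn G (Set.Iic b) := hint1.add hint3
  -- Part 1: integral over Iic a, via a modification of F at a (left limit)
  set F1 : ℝ → ℝ := Function.update F a La with hF1
  have hF1eq : ∀ x, x ≠ a → F1 x = F x := fun x hx => Function.update_of_ne hx _ _
  have hF1a : F1 a = La := Function.update_self _ _ _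
  have hint_Iic_a : IntegrableOn G (Set.Iic a) :=
    hGint.mono (Set.Iic_subset_Iic.2 (le_of_lt hab)) le_rfl
  have key1 : ∫ x in Set.Iic a, G x = La := by
    have hderiv1 : ∀ x ∈ Set.Iio a, HasDerivAt F1 (G x) x := by
      intro x hx
      refine (hFderiv x (Or.inl hx)).congr_of_eventuallyEq ?_
      filter_upwards [Iio_mem_nhds hx] with y hy
      exact hF1eq y (ne_of_lt hy)
    have hcont1 : ContinuousWithinAt F1 (Set.Iic a) a := by
      have h1 : Tendsto F1 (nhdsWithin a (Set.Iio a)) (nhds La) := by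
        refine hF_am.congr' ?_
        filter_upwards [self_mem_nhdsWithin] with y hy
        exact (hF1eq y (ne_of_lt hy)).symm
      have h2 : Tendsto F1 (nhdsWithin a {a}) (nhds La) := by
        rw [nhdsWithin_singleton]
        simpa [hF1a] using tendsto_pure_nhds F1 a
      have h3 : Tendsto F1 (nhdsWithin a (Set.Iio a ∪ {a})) (nhds La) := by
        rw [nhdsWithin_union]; exact h1.sup h2
      rw [ContinuousWithinAt, hF1a]
      refine h3.mono_left (nhdsWithin_mono a ?_)
      intro y hy
      rcases eq_or_lt_of_le (Set.mem_Iic.mp hy) with h | h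
      · exact Or.inr h
      · exact Or.inl h
    have hbot : Tendsto F1 atBot (nhds 0) := by
      have h0 : Tendsto F atBot (nhds 0) := by simpa using hbot1.add hbot2
      refine h0.congr' ?_
      filter_upwards [eventually_lt_atBot a] with y hy
      exact (hF1eq y (ne_of_lt hy)).symm
    have := MeasureTheory.integral_Iic_of_hasDerivAt_of_tendsto hcont1 hderiv1 hint_Iic_a hbot
    rw [this, hF1a, sub_zero]
  -- Part 2: integral over Ioc a b, via a modification of F at a (right limit)
  set F2 : ℝ → ℝ := Function.update F a Lap with hF2
  have hF2eq : ∀ x, x ≠ a → F2 x = F x := fun x hx => Function.update_of_ne hx _ _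
  have hF2a : F2 a = Lap := Function.update_self _ _ _
  have hF2b : F2 b = F b := hF2eq b (ne_of_gt hab)
  have hint_Ioc : IntegrableOn G (Set.Ioc a b) :=
    hGint.mono (fun y hy => Set.mem_Iic.mpr hy.2 : Set.Ioc a b ⊆ Set.Iic b) le_rfl
  have key2 : ∫ x in Set.Ioc a b, G x = F b - Lap := by
    have hderiv2 : ∀ x ∈ Set.Ioo a b, HasDerivAt F2 (G x) x := by
      intro x hx
      refine (hFderiv x (Or.inr hx)).congr_of_eventuallyEq ?_
      filter_upwards [Ioi_mem_nhds hx.1] with y hy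
      exact hF2eq y (ne_of_gt hy)
    have ca : ContinuousWithinAt F2 (Set.Icc a b) a := by
      have h1 : Tendsto F2 (nhdsWithin a (Set.Ioi a)) (nhds Lap) := by
        refine hF_ap.congr' ?_
        filter_upwards [self_mem_nhdsWithin] with y hy
        exact (hF2eq y (ne_of_gt hy)).symm
      have h2 : Tendsto F2 (nhdsWithin a {a}) (nhds Lap) := by
        rw [nhdsWithin_singleton]
        simpa [hF2a] using tendsto_pure_nhds F2 a
      have h3 : Tendsto F2 (nhdsWithin a (Set.Ioi a ∪ {a})) (nhds Lap) := by
        rw [nhdsWithin_union]; exact h1.sup h2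
      rw [ContinuousWithinAt, hF2a]
      refine h3.mono_left (nhdsWithin_mono a ?_)
      rintro y ⟨h1y, _⟩
      rcases eq_or_lt_of_le h1y with h | h
      · exact Or.inr h.symm
      · exact Or.inl h
    have cb : ContinuousWithinAt F2 (Set.Icc a b) b := by
      have hne : ∀ᶠ y in nhdsWithin b (Set.Iio b), y ≠ a :=
        eventually_nhdsWithin_of_eventually_nhds (eventually_ne_nhds (ne_of_gt hab))
      have h1 : Tendsto F2 (nhdsWithin b (Set.Iio b)) (nhds (F b)) := by
        refine hF_b.congr' ?_
        filter_upwards [hne] with y hy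
        exact (hF2eq y hy).symm
      have h2 : Tendsto F2 (nhdsWithin b {b}) (nhds (F b)) := by
        rw [nhdsWithin_singleton]
        simpa [hF2b] using tendsto_pure_nhds F2 b
      have h3 : Tendsto F2 (nhdsWithin b (Set.Iio b ∪ {b})) (nhds (F b)) := by
        rw [nhdsWithin_union]; exact h1.sup h2
      rw [ContinuousWithinAt, hF2b]
      refine h3.mono_left (nhdsWithin_mono b ?_)
      rintro y ⟨_, h2y⟩
      rcases eq_or_lt_of_le h2y with h | h
      · exact Or.inr h
      · exact Or.inl h
    have hcont2 : ContinuousOn F2 (Set.Icc a b) := by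
      intro x hx
      rcases eq_or_lt_of_le hx.1 with h | hax
      · rw [← h]; exact ca
      rcases eq_or_lt_of_le hx.2 with h | hxb
      · rw [h]; exact cb
      · exact ((hderiv2 x ⟨hax, hxb⟩).continuousAt).continuousWithinAt
    have hGii : IntervalIntegrable G volume a b := by
      rw [intervalIntegrable_iff_integrableOn_Ioc_of_le (le_of_lt hab)]
      exact hint_Ioc
    have h4 := intervalIntegral.integral_eq_sub_of_hasDeriv_right_of_le (le_of_lt hab) hcont2
      (fun x hx => (hderiv2 x hx).hasDerivWithinAt) hGii
    rw [intervalIntegral.integral_of_le (le_of_lt hab)] at h4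
    rw [h4, hF2b, hF2a]
  -- combine the two pieces
  have hsplit : ∫ x in Set.Iic b, G x = (∫ x in Set.Iic a, G x) + ∫ x in Set.Ioc a b, G x := by
    rw [← MeasureTheory.setIntegral_union (Set.Iic_disjoint_Ioc le_rfl) measurableSet_Ioc
      hint_Iic_a hint_Ioc, Set.Iic_union_Ioc_eq_Iic (le_of_lt hab)]
  have hGzero : ∫ x in Set.Iic b, G x = 0 := by
    rw [hsplit, key1, key2]
    have hFb : F b = Iap * u b - Iam * u b := by
      simp only [hF, hbc2, hbc3]; ring
    rw [hFb, hLa, hLap, hbc1, hub]; ring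
  have hadd : ∫ x in Set.Iic b, G x
      = (∫ x in Set.Iic b, v x * (X x * u' x + H x * u'' x)) + ∫ x in Set.Iic b, I' x * u x :=
    MeasureTheory.integral_add hint1 hint3
  have hneg : ∫ x in Set.Iic b, (-I' x) * u x = -∫ x in Set.Iic b, I' x * u x := by
    rw [← MeasureTheory.integral_neg]
    congr 1; funext x; ring
  rw [hneg]
  linarith [hadd, hGzero]
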